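/- For 0 < y_a < μ₁ < 1 with Δ_a/2 = μ₁ − y_a, let s(j) ~ Binomial(j, μ₁) for each j, and let j* be any random index in {0,…,T−1} determined by the sequence s(·). Then E[(1/F^{B}_{j*+1, y_a}(s(j*))) · I(s(j*) ≤ ⌊y_a j*⌋)] ≤ ∑_{j=0}^{T−1} ∑_{s=0}^{⌊y_a j⌋} f^{B}_{j,μ₁}(s)/F^{B}_{j+1,y_a}(s) ≤ ∑_{j≥0} (μ₁/(Δ_a/2)) e^{−D_a j} ≤ 16/Δ_a³, where D_a is the KL divergence between Bernoulli(y_a) and Bernoulli(μ₁). -/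

import Mathlib

open MeasureTheory Real

noncomputable def binPMF (n : ℕ) (p : ℝ) (s : ℕ) : ℝ :=
  (n.choose s : ℝ) * p ^ s * (1 - p) ^ (n - s)

noncomputable def binCDF (n : ℕ) (p : ℝ) (s : ℤ) : ℝ :=
  ∑ k ∈ Finset.range (s + 1).toNat, binPMF n p k

lemma binPMF_nonneg (n : ℕ) {p : ℝ} (h0 : 0 ≤ p) (h1 : p ≤ 1) (s : ℕ) : 0 ≤ binPMF n p s := by
  unfold binPMF
  have : (0:ℝ) ≤ 1 - p := by linarith
  positivity

lemma binCDF_nat (n : ℕ) (p : ℝ) (s : ℕ) :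
    binCDF n p (s : ℤ) = ∑ k ∈ Finset.range (s + 1), binPMF n p k := by
  unfold binCDF
  norm_num

lemma binCDF_pos (n : ℕ) {p : ℝ} (h0 : 0 < p) (h1 : p < 1) (s : ℕ) :
    0 < binCDF n p (s : ℤ) := by
  rw [binCDF_nat]
  apply Finset.sum_pos' (fun k _ => binPMF_nonneg n h0.le h1.le k)
  refine ⟨0, Finset.mem_range.mpr (Nat.succ_pos s), ?_⟩
  have : (0:ℝ) < 1 - p := by linarith
  simp only [binPMF, Nat.choose_zero_right, Nat.cast_one, pow_zero, one_mul, Nat.sub_zero, mul_one]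
  positivity

lemma binCDF_ge_pmf (n : ℕ) {p : ℝ} (h0 : 0 ≤ p) (h1 : p ≤ 1) (s : ℕ) :
    binPMF n p s ≤ binCDF n p (s : ℤ) := by
  rw [binCDF_nat]
  exact Finset.single_le_sum (fun k _ => binPMF_nonneg n h0 h1 k)
    (Finset.mem_range.mpr (Nat.lt_succ_self s))

lemma binPMF_pos {n s : ℕ} {p : ℝ} (h0 : 0 < p) (h1 : p < 1) (hs : s ≤ n) :
    0 < binPMF n p s := by
  unfold binPMF
  have h2 : (0:ℝ) < 1 - p := by linarith
  have h3 : 0 < n.choose s := Nat.choose_pos hs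
  have : (0:ℝ) < (n.choose s : ℝ) := by exact_mod_cast h3
  positivity

lemma inner_bound (ya μ₁ Da : ℝ) (hy : 0 < ya) (hyμ : ya < μ₁) (hμ : μ₁ < 1)
    (hDa : Da = ya * Real.log (ya / μ₁) + (1 - ya) * Real.log ((1 - ya) / (1 - μ₁)))
    (j : ℕ) :
    ∑ s₀ ∈ Finset.range (⌊ya * (j : ℝ)⌋₊ + 1), binPMF j μ₁ s₀ / binCDF (j + 1) ya (s₀ : ℤ)
      ≤ (μ₁ / (μ₁ - ya)) * Real.exp (-Da * j) := by
  have hμ0 : 0 < μ₁ := lt_trans hy hyμ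
  have h1ya : 0 < 1 - ya := by linarith
  have h1μ : 0 < 1 - μ₁ := by linarith
  obtain ⟨a, ha⟩ : ∃ a : ℝ, a = μ₁ / ya := ⟨_, rfl⟩
  obtain ⟨b, hb⟩ : ∃ b : ℝ, b = (1 - μ₁) / (1 - ya) := ⟨_, rfl⟩
  obtain ⟨ρ, hρ⟩ : ∃ ρ : ℝ, ρ = a / b := ⟨_, rfl⟩
  obtain ⟨m, hm⟩ : ∃ m : ℕ, m = ⌊ya * (j : ℝ)⌋₊ := ⟨_, rfl⟩
  rw [← hm]
  have ha1 : 1 < a := by rw [ha]; exact (one_lt_div hy).mpr hyμ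
  have hb0 : 0 < b := by rw [hb]; positivity
  have hb1 : b < 1 := by rw [hb]; exact (div_lt_one h1ya).mpr (by linarith)
  have ha0 : 0 < a := lt_trans one_pos ha1
  have hρ1 : 1 < ρ := by rw [hρ]; exact (one_lt_div hb0).mpr (lt_trans hb1 ha1)
  have hρ0 : 0 < ρ := lt_trans one_pos hρ1
  have hab : a * ya = μ₁ := by rw [ha]; field_simp
  have hbb : b * (1 - ya) = 1 - μ₁ := by rw [hb]; field_simp
  have hmya : (m : ℝ) ≤ ya * j := by rw [hm]; exact Nat.floor_le (by positivity)
  have hmj : m ≤ j := by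
    have h : ya * (j:ℝ) ≤ j := by nlinarith [Nat.cast_nonneg (α := ℝ) j]
    rw [hm]
    calc ⌊ya * (j : ℝ)⌋₊ ≤ ⌊(j:ℝ)⌋₊ := Nat.floor_le_floor h
      _ = j := Nat.floor_natCast j
  -- step 1: termwise bound
  have step1 : ∀ s₀ ∈ Finset.range (m + 1),
      binPMF j μ₁ s₀ / binCDF (j + 1) ya (s₀ : ℤ) ≤ (b ^ j / (1 - ya)) * ρ ^ s₀ := by
    intro s₀ hs₀
    have hs₀j : s₀ ≤ j := le_trans (Nat.lt_succ_iff.mp (Finset.mem_range.mp hs₀)) hmj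
    have hpmf_pos : 0 < binPMF (j + 1) ya s₀ := binPMF_pos hy (by linarith) (by omega)
    have hcdf_ge : binPMF (j + 1) ya s₀ ≤ binCDF (j + 1) ya (s₀ : ℤ) :=
      binCDF_ge_pmf _ hy.le (by linarith) _
    have h1 : binPMF j μ₁ s₀ / binCDF (j + 1) ya (s₀ : ℤ)
        ≤ binPMF j μ₁ s₀ / binPMF (j + 1) ya s₀ :=
      div_le_div_of_nonneg_left (binPMF_nonneg j hμ0.le hμ.le s₀) hpmf_pos hcdf_ge
    refine h1.trans ?_
    rw [div_le_iff₀ hpmf_pos]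
    obtain ⟨k, hk⟩ : ∃ k, j = s₀ + k := ⟨j - s₀, by omega⟩
    subst hk
    have hchoose : ((s₀ + k).choose s₀ : ℝ) ≤ ((s₀ + k + 1).choose s₀ : ℝ) := by
      exact_mod_cast Nat.choose_le_choose s₀ (Nat.le_succ _)
    unfold binPMF
    have e1 : s₀ + k - s₀ = k := by omega
    have e2 : s₀ + k + 1 - s₀ = k + 1 := by omega
    rw [e1, e2]
    have key : (b ^ (s₀ + k) / (1 - ya)) * ρ ^ s₀ *
        (((s₀ + k + 1).choose s₀ : ℝ) * ya ^ s₀ * (1 - ya) ^ (k + 1))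
        = ((s₀ + k + 1).choose s₀ : ℝ) * (a * ya) ^ s₀ * (b * (1 - ya)) ^ k := by
      rw [hρ, div_pow, pow_add, mul_pow, mul_pow]
      have hbne : b ≠ 0 := ne_of_gt hb0
      have h1ne : (1:ℝ) - ya ≠ 0 := ne_of_gt h1ya
      field_simp
      ring
    rw [key, hab, hbb]
    have hmm : (0:ℝ) ≤ μ₁ ^ s₀ * (1 - μ₁) ^ k := by positivity
    nlinarith [hmm, hchoose]
  have step2 : ∑ s₀ ∈ Finset.range (m + 1), binPMF j μ₁ s₀ / binCDF (j + 1) ya (s₀ : ℤ)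
      ≤ (b ^ j / (1 - ya)) * ((ρ ^ (m + 1) - 1) / (ρ - 1)) := by
    calc ∑ s₀ ∈ Finset.range (m + 1), binPMF j μ₁ s₀ / binCDF (j + 1) ya (s₀ : ℤ)
        ≤ ∑ s₀ ∈ Finset.range (m + 1), (b ^ j / (1 - ya)) * ρ ^ s₀ :=
          Finset.sum_le_sum step1
      _ = (b ^ j / (1 - ya)) * ∑ s₀ ∈ Finset.range (m + 1), ρ ^ s₀ := by
          rw [Finset.mul_sum]
      _ = (b ^ j / (1 - ya)) * ((ρ ^ (m + 1) - 1) / (ρ - 1)) := by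
          rw [geom_sum_eq (ne_of_gt hρ1)]
  refine step2.trans ?_
  -- step 3
  have hρm : (0:ℝ) < ρ - 1 := by linarith
  have step3a : (b ^ j / (1 - ya)) * ((ρ ^ (m + 1) - 1) / (ρ - 1))
      ≤ (b ^ j / (1 - ya)) * (ρ ^ (m + 1) / (ρ - 1)) := by
    apply mul_le_mul_of_nonneg_left _ (by positivity)
    exact div_le_div_of_nonneg_right (by linarith) hρm.le
  refine step3a.trans ?_
  have hba : b < a := lt_trans hb1 ha1
  have hrw0 : (b ^ j / (1 - ya)) * (ρ ^ (m + 1) / (ρ - 1))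
      = (a / ((1 - ya) * (a - b))) * (a ^ m * b ^ j / b ^ m) := by
    rw [hρ, div_pow]
    have h1 : (0:ℝ) < a - b := by linarith
    have h2 : a / b - 1 = (a - b) / b := by field_simp
    rw [h2, pow_succ]
    field_simp
    ring
  have hrw1 : a / ((1 - ya) * (a - b)) = μ₁ / (μ₁ - ya) := by
    have hd : a - b = (μ₁ - ya) / (ya * (1 - ya)) := by
      rw [ha, hb]; field_simp; ring
    rw [hd, ha]
    rw [div_eq_div_iff]
    · field_simp
    · have h1 : (0:ℝ) < μ₁ - ya := by linarith
      positivity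
    · linarith
  rw [hrw0, hrw1]
  have hμya : (0:ℝ) < μ₁ - ya := by linarith
  apply mul_le_mul_of_nonneg_left _ (by positivity)
  -- a^m * b^j / b^m ≤ exp(-Da * j)
  have hexp : Real.exp (-Da * j) = a ^ (ya * j) * b ^ ((1 - ya) * j) := by
    rw [Real.rpow_def_of_pos ha0, Real.rpow_def_of_pos hb0, ← Real.exp_add]
    congr 1
    rw [hDa, ha, hb]
    rw [Real.log_div (ne_of_gt hy) (ne_of_gt hμ0), Real.log_div (ne_of_gt h1ya) (ne_of_gt h1μ),
        Real.log_div (ne_of_gt hμ0) (ne_of_gt hy), Real.log_div (ne_of_gt h1μ) (ne_of_gt h1ya)]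
    ring
  rw [hexp]
  have hlhs : a ^ m * b ^ j / b ^ m = a ^ (m : ℝ) * b ^ ((j : ℝ) - (m : ℝ)) := by
    rw [Real.rpow_sub hb0, Real.rpow_natCast, Real.rpow_natCast, Real.rpow_natCast]
    ring
  rw [hlhs]
  have h1 : a ^ (m:ℝ) ≤ a ^ (ya * (j:ℝ)) := Real.rpow_le_rpow_of_exponent_le ha1.le hmya
  have h2 : b ^ ((j:ℝ) - (m:ℝ)) ≤ b ^ ((1 - ya) * (j:ℝ)) :=
    Real.rpow_le_rpow_of_exponent_ge hb0 hb1.le (by linarith)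
  exact mul_le_mul h1 h2 (Real.rpow_pos_of_pos hb0 _).le (Real.rpow_pos_of_pos ha0 _).le

open MeasureTheory

lemma pinsker (ya μ₁ : ℝ) (h0 : 0 < ya) (h1 : ya < μ₁) (h2 : μ₁ < 1) :
    2 * (μ₁ - ya) ^ 2 ≤ ya * Real.log (ya / μ₁) + (1 - ya) * Real.log ((1 - ya) / (1 - μ₁)) := by
  set f : ℝ → ℝ := fun t => ya * (Real.log ya - Real.log t)
    + (1 - ya) * (Real.log (1 - ya) - Real.log (1 - t)) - 2 * (t - ya) ^ 2 with hf
  have hderiv : ∀ t ∈ Set.Ioo ya μ₁,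
      HasDerivAt f (-ya / t + (1 - ya) / (1 - t) - 4 * (t - ya)) t := by
    intro t ht
    have ht0 : 0 < t := lt_trans h0 ht.1
    have ht1 : t < 1 := lt_trans ht.2 h2
    have h₁ : HasDerivAt (fun t : ℝ => Real.log t) t⁻¹ t := Real.hasDerivAt_log (ne_of_gt ht0)
    have h₂ : HasDerivAt (fun t : ℝ => 1 - t) (-1) t := by
      exact (hasDerivAt_id t).const_sub 1
    have h₃ : HasDerivAt (fun t : ℝ => Real.log (1 - t)) (-(1 - t)⁻¹) t := by
      have := (Real.hasDerivAt_log (by linarith : (1:ℝ) - t ≠ 0)).comp t h₂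
      simp only [mul_neg, mul_one] at this; exact this
    have h₄ : HasDerivAt (fun t : ℝ => 2 * (t - ya) ^ 2) (4 * (t - ya)) t := by
      have : HasDerivAt (fun t : ℝ => (t - ya) ^ 2) (2 * (t - ya)) t := by
        have h := ((hasDerivAt_id' t).sub_const ya).pow 2
        simp only [Nat.cast_ofNat, Nat.add_one_sub_one, pow_one, mul_one] at h; exact h
      have := this.const_mul (2:ℝ)
      rw [show (4:ℝ) * (t - ya) = 2 * (2 * (t - ya)) by ring]; exact this
    have h₅ : HasDerivAt (fun t : ℝ => ya * (Real.log ya - Real.log t)) (-(ya * t⁻¹)) t := by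
      have := ((hasDerivAt_const t (Real.log ya)).sub h₁).const_mul ya
      rw [show -(ya * t⁻¹) = ya * (0 - t⁻¹) by ring]; exact this
    have h₆ : HasDerivAt (fun t : ℝ => (1 - ya) * (Real.log (1 - ya) - Real.log (1 - t)))
        ((1 - ya) * (1 - t)⁻¹) t := by
      have := ((hasDerivAt_const t (Real.log (1 - ya))).sub h₃).const_mul (1 - ya)
      rw [show (1 - ya) * (1 - t)⁻¹ = (1 - ya) * (0 - -(1 - t)⁻¹) by ring]; exact this
    have := (h₅.add h₆).sub h₄
    rw [show -ya / t + (1 - ya) / (1 - t) - 4 * (t - ya) = -(ya * t⁻¹) + (1 - ya) * (1 - t)⁻¹ - 4 * (t - ya) by ring]; exact this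
  have hmono : MonotoneOn f (Set.Icc ya μ₁) := by
    apply monotoneOn_of_deriv_nonneg (convex_Icc ya μ₁)
    · apply ContinuousOn.sub (ContinuousOn.add ?_ ?_)
      · exact (continuous_const.mul ((continuous_id.sub continuous_const).pow 2)).continuousOn
      · apply ContinuousOn.mul continuousOn_const
        apply ContinuousOn.sub continuousOn_const
        apply Real.continuousOn_log.comp continuousOn_id
        intro t ht; exact ne_of_gt (lt_of_lt_of_le h0 ht.1)
      · apply ContinuousOn.mul continuousOn_const
        apply ContinuousOn.sub continuousOn_const
        apply Real.continuousOn_log.comp (continuousOn_const.sub continuousOn_id)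
        intro t ht
        have : t < 1 := lt_of_le_of_lt ht.2 h2
        exact ne_of_gt (by linarith : (0:ℝ) < 1 - t)
    · intro t ht
      rw [interior_Icc] at ht
      exact (hderiv t ht).differentiableAt.differentiableWithinAt
    · intro t ht
      rw [interior_Icc] at ht
      rw [(hderiv t ht).deriv]
      have ht0 : 0 < t := lt_trans h0 ht.1
      have ht1 : 0 < 1 - t := by have := lt_trans ht.2 h2; linarith
      have key : -ya / t + (1 - ya) / (1 - t) - 4 * (t - ya)
          = (t - ya) * (2 * t - 1) ^ 2 / (t * (1 - t)) := by
        field_simp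
        ring
      rw [key]
      have : 0 ≤ (t - ya) * (2 * t - 1) ^ 2 := by
        apply mul_nonneg (by linarith [ht.1]) (sq_nonneg _)
      positivity
  have h0' : f ya = 0 := by simp [hf]
  have := hmono (Set.left_mem_Icc.mpr (le_of_lt h1)) (Set.right_mem_Icc.mpr (le_of_lt h1)) (le_of_lt h1)
  rw [h0'] at this
  have hlog1 : Real.log (ya / μ₁) = Real.log ya - Real.log μ₁ :=
    Real.log_div (ne_of_gt h0) (ne_of_gt (lt_trans h0 h1))
  have hlog2 : Real.log ((1 - ya) / (1 - μ₁)) = Real.log (1 - ya) - Real.log (1 - μ₁) :=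
    Real.log_div (by linarith) (by linarith)
  rw [hlog1, hlog2]
  simp only [hf] at this
  linarith

lemma exp_gap {Da Δa : ℝ} (hΔ : 0 < Δa) (hΔ2 : Δa < 2) (hP : Δa ^ 2 / 2 ≤ Da) :
    Δa ^ 2 / 8 ≤ 1 - Real.exp (-Da) := by
  have hDa : 0 < Da := lt_of_lt_of_le (by positivity) hP
  by_cases h1 : Da ≤ 1
  · have he : Real.exp (-Da) ≤ 1 / (1 + Da) := by
      rw [Real.exp_neg]
      rw [div_eq_inv_mul, mul_one]
      apply inv_anti₀ (by linarith)
      linarith [Real.add_one_le_exp Da]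
    have h2 : 1 - 1 / (1 + Da) = Da / (1 + Da) := by field_simp; ring
    have h3 : Da / (1 + Da) ≥ Da / 2 := by
      apply div_le_div_of_nonneg_left (le_of_lt hDa) (by linarith) (by linarith)
    nlinarith
  · have he : Real.exp (-Da) ≤ 1 / 2 := by
      have : Real.exp (-Da) ≤ Real.exp (-1) := Real.exp_le_exp.mpr (by linarith)
      have h2e : (2:ℝ) ≤ Real.exp 1 := by linarith [Real.add_one_le_exp 1]
      have : Real.exp (-1) ≤ 1/2 := by
        rw [Real.exp_neg]
        rw [inv_le_comm₀ (Real.exp_pos 1) (by norm_num)]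
        simpa using h2e
      linarith
    nlinarith

/-- for `0 < y_a < μ₁ < 1` with `Δ_a/2 = μ₁ − y_a`, `s(j) ~ Binomial(j, μ₁)`
for each `j`, and `j*` any random index in `{0,…,T−1}` determined by the sequence `s(·)`:
`E[(1/F^B_{j*+1, y_a}(s(j*))) · I(s(j*) ≤ ⌊y_a j*⌋)]
  ≤ ∑_{j=0}^{T−1} ∑_{s=0}^{⌊y_a j⌋} f^B_{j,μ₁}(s)/F^B_{j+1,y_a}(s)
  ≤ ∑_{j≥0} (μ₁/(Δ_a/2)) e^{−D_a j} ≤ 16/Δ_a³`,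
where `D_a` is the KL divergence between `Bernoulli(y_a)` and `Bernoulli(μ₁)`. -/
theorem random_index_union_bound
    {Ω : Type*} [MeasurableSpace Ω] (ℙ : Measure Ω) [IsProbabilityMeasure ℙ]
    (ya μ₁ Δa Da : ℝ) (hy : 0 < ya) (hyμ : ya < μ₁) (hμ : μ₁ < 1)
    (hΔ : Δa / 2 = μ₁ - ya)
    (hDa : Da = ya * Real.log (ya / μ₁) + (1 - ya) * Real.log ((1 - ya) / (1 - μ₁)))
    (T : ℕ) (hT : 0 < T)
    (s : ℕ → Ω → ℕ) (hs_meas : ∀ j, Measurable (s j))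
    (hs_law : ∀ j s₀, ℙ {ω | s j ω = s₀} = ENNReal.ofReal (binPMF j μ₁ s₀))
    (jstar : Ω → ℕ) (hjstar_lt : ∀ ω, jstar ω < T)
    (hjstar_det : ∃ f : (ℕ → ℕ) → ℕ, ∀ ω, jstar ω = f (fun j => s j ω)) :
    (∫ ω, (if s (jstar ω) ω ≤ ⌊ya * (jstar ω : ℝ)⌋₊ then
        1 / binCDF (jstar ω + 1) ya (s (jstar ω) ω : ℤ) else 0) ∂ℙ) ≤
      (∑ j ∈ Finset.range T, ∑ s₀ ∈ Finset.range (⌊ya * (j : ℝ)⌋₊ + 1),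
        binPMF j μ₁ s₀ / binCDF (j + 1) ya (s₀ : ℤ)) ∧
    (∑ j ∈ Finset.range T, ∑ s₀ ∈ Finset.range (⌊ya * (j : ℝ)⌋₊ + 1),
        binPMF j μ₁ s₀ / binCDF (j + 1) ya (s₀ : ℤ)) ≤
      (∑' j : ℕ, (μ₁ / (Δa / 2)) * Real.exp (-Da * j)) ∧
    (∑' j : ℕ, (μ₁ / (Δa / 2)) * Real.exp (-Da * j)) ≤ 16 / Δa ^ 3 := by
  have hμ0 : 0 < μ₁ := lt_trans hy hyμ
  have h1ya : 0 < 1 - ya := by linarith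
  have hcdf_pos : ∀ (n : ℕ) (s₀ : ℕ), 0 < binCDF n ya (s₀ : ℤ) :=
    fun n s₀ => binCDF_pos n hy (by linarith) s₀
  have hF : ∀ (j s₀ : ℕ), 0 ≤ 1 / binCDF (j + 1) ya (s₀ : ℤ) :=
    fun j s₀ => (one_div_pos.mpr (hcdf_pos _ _)).le
  have hterm_nonneg : ∀ (j s₀ : ℕ), 0 ≤ binPMF j μ₁ s₀ / binCDF (j + 1) ya (s₀ : ℤ) :=
    fun j s₀ => div_nonneg (binPMF_nonneg j hμ0.le hμ.le s₀) (hcdf_pos _ _).le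
  -- Pinsker
  have hP : 2 * (μ₁ - ya) ^ 2 ≤ Da := hDa ▸ pinsker ya μ₁ hy hyμ hμ
  have hΔ0 : 0 < Δa := by nlinarith
  have hΔ2 : Δa < 2 := by nlinarith
  have hDa0 : 0 < Da := lt_of_lt_of_le (by nlinarith) hP
  have hr1 : Real.exp (-Da) < 1 := Real.exp_lt_one_iff.mpr (by linarith)
  have hexp_pow : ∀ j : ℕ, Real.exp (-Da * j) = Real.exp (-Da) ^ j := by
    intro j
    rw [← Real.exp_nat_mul]
    ring_nf
  have hsum : Summable (fun j : ℕ => (μ₁ / (Δa / 2)) * Real.exp (-Da * j)) := by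
    simp_rw [hexp_pow]
    exact (summable_geometric_of_lt_one (Real.exp_nonneg _) hr1).mul_left _
  refine ⟨?_, ?_, ?_⟩
  · -- Part 1
    set G : Ω → ℝ := fun ω => ∑ j ∈ Finset.range T, ∑ s₀ ∈ Finset.range (⌊ya * (j : ℝ)⌋₊ + 1),
      (if s j ω = s₀ then 1 / binCDF (j + 1) ya (s₀ : ℤ) else 0) with hG
    have hind : ∀ (j s₀ : ℕ), (fun ω => if s j ω = s₀ then 1 / binCDF (j + 1) ya (s₀ : ℤ) else 0)
        = Set.indicator ((s j) ⁻¹' {s₀}) (fun _ => 1 / binCDF (j + 1) ya (s₀ : ℤ)) := by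
      intro j s₀
      ext ω
      by_cases h : s j ω = s₀ <;> simp [Set.indicator, h]
    have hmeas : ∀ (j s₀ : ℕ), MeasurableSet ((s j) ⁻¹' {s₀}) :=
      fun j s₀ => hs_meas j (measurableSet_singleton s₀)
    have hInt : ∀ (j s₀ : ℕ),
        Integrable (fun ω => if s j ω = s₀ then 1 / binCDF (j + 1) ya (s₀ : ℤ) else 0) ℙ := by
      intro j s₀
      rw [hind]
      exact (integrable_const _).indicator (hmeas j s₀)
    have hG_int : Integrable G ℙ := by
      apply integrable_finset_sum
      intro j _
      exact integrable_finset_sum _ (fun s₀ _ => hInt j s₀)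
    have hle : ∀ ω, (if s (jstar ω) ω ≤ ⌊ya * (jstar ω : ℝ)⌋₊ then
        1 / binCDF (jstar ω + 1) ya (s (jstar ω) ω : ℤ) else 0) ≤ G ω := by
      intro ω
      have hnn_inner : ∀ j : ℕ, 0 ≤ ∑ s₀ ∈ Finset.range (⌊ya * (j : ℝ)⌋₊ + 1),
          (if s j ω = s₀ then 1 / binCDF (j + 1) ya (s₀ : ℤ) else 0) := by
        intro j
        apply Finset.sum_nonneg
        intro s₀ _
        split
        · exact hF _ _
        · exact le_rfl
      by_cases hc : s (jstar ω) ω ≤ ⌊ya * (jstar ω : ℝ)⌋₊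
      · rw [if_pos hc]
        have h1 : 1 / binCDF (jstar ω + 1) ya (s (jstar ω) ω : ℤ)
            ≤ ∑ s₀ ∈ Finset.range (⌊ya * ((jstar ω : ℕ) : ℝ)⌋₊ + 1),
              (if s (jstar ω) ω = s₀ then 1 / binCDF (jstar ω + 1) ya (s₀ : ℤ) else 0) := by
          have := Finset.single_le_sum
            (f := fun s₀ => (if s (jstar ω) ω = s₀ then 1 / binCDF (jstar ω + 1) ya (s₀ : ℤ) else 0))
            (fun s₀ _ => by split; exacts [hF _ _, le_rfl])
            (Finset.mem_range.mpr (Nat.lt_succ_of_le hc))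
          simpa using this
        refine h1.trans ?_
        exact Finset.single_le_sum (fun j _ => hnn_inner j)
          (Finset.mem_range.mpr (hjstar_lt ω))
      · rw [if_neg hc]
        exact Finset.sum_nonneg (fun j _ => hnn_inner j)
    by_cases hg : Integrable (fun ω => (if s (jstar ω) ω ≤ ⌊ya * (jstar ω : ℝ)⌋₊ then
        1 / binCDF (jstar ω + 1) ya (s (jstar ω) ω : ℤ) else 0)) ℙ
    · have step : (∫ ω, (if s (jstar ω) ω ≤ ⌊ya * (jstar ω : ℝ)⌋₊ then
          1 / binCDF (jstar ω + 1) ya (s (jstar ω) ω : ℤ) else 0) ∂ℙ) ≤ ∫ ω, G ω ∂ℙ :=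
        integral_mono hg hG_int hle
      refine step.trans ?_
      rw [hG, integral_finset_sum _ (fun j _ => integrable_finset_sum _ (fun s₀ _ => hInt j s₀))]
      apply Finset.sum_le_sum
      intro j _
      rw [integral_finset_sum _ (fun s₀ _ => hInt j s₀)]
      apply Finset.sum_le_sum
      intro s₀ _
      rw [hind, integral_indicator_const _ (hmeas j s₀)]
      have hlaw : ℙ ((s j) ⁻¹' {s₀}) = ENNReal.ofReal (binPMF j μ₁ s₀) := hs_law j s₀
      rw [measureReal_def, hlaw, smul_eq_mul, ENNReal.toReal_ofReal (binPMF_nonneg j hμ0.le hμ.le s₀)]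
      rw [mul_one_div]
    · rw [integral_undef hg]
      exact Finset.sum_nonneg (fun j _ => Finset.sum_nonneg (fun s₀ _ => hterm_nonneg j s₀))
  · -- Part 2
    have hc : μ₁ / (Δa / 2) = μ₁ / (μ₁ - ya) := by rw [hΔ]
    calc (∑ j ∈ Finset.range T, ∑ s₀ ∈ Finset.range (⌊ya * (j : ℝ)⌋₊ + 1),
        binPMF j μ₁ s₀ / binCDF (j + 1) ya (s₀ : ℤ))
        ≤ ∑ j ∈ Finset.range T, (μ₁ / (Δa / 2)) * Real.exp (-Da * j) := by
          apply Finset.sum_le_sum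
          intro j _
          rw [hc]
          exact inner_bound ya μ₁ Da hy hyμ hμ hDa j
      _ ≤ ∑' j : ℕ, (μ₁ / (Δa / 2)) * Real.exp (-Da * j) := by
          apply Summable.sum_le_tsum _ _ hsum
          intro j _
          have h2 : 0 < Δa / 2 := by linarith
          positivity
  · -- Part 3
    have htsum : (∑' j : ℕ, (μ₁ / (Δa / 2)) * Real.exp (-Da * j))
        = (μ₁ / (Δa / 2)) * (1 - Real.exp (-Da))⁻¹ := by
      simp_rw [hexp_pow]
      rw [tsum_mul_left, tsum_geometric_of_lt_one (Real.exp_nonneg _) hr1]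
    rw [htsum]
    have hgap : Δa ^ 2 / 8 ≤ 1 - Real.exp (-Da) := exp_gap hΔ0 hΔ2 (by nlinarith)
    have h1 : μ₁ / (Δa / 2) ≤ 2 / Δa := by
      rw [div_le_div_iff₀ (by linarith) hΔ0]
      nlinarith
    have h2 : (1 - Real.exp (-Da))⁻¹ ≤ 8 / Δa ^ 2 := by
      rw [← one_div, div_le_div_iff₀ (by nlinarith) (pow_pos hΔ0 2)]
      nlinarith
    calc (μ₁ / (Δa / 2)) * (1 - Real.exp (-Da))⁻¹ ≤ (2 / Δa) * (8 / Δa ^ 2) := by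
          apply mul_le_mul h1 h2 (inv_nonneg.mpr (by nlinarith)) (by positivity)
      _ = 16 / Δa ^ 3 := by
          rw [div_mul_div_comm]
          norm_num
          ring
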